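/- For every real number x > 27, the open interval (x/2, x − 8) contains at least two distinct prime numbers. -/

import Mathlib

open Real

namespace TwoPrimesAux


/-- Adapted from `Bertrand.real_main_inequality`, with an extra factor `(2x)^10`. -/
theorem real_main_inequality {x : ℝ} (x_large : (2048 : ℝ) ≤ x) :
    x * (2 * x) ^ (√(2 * x) + 10) * 4 ^ (2 * x / 3) ≤ 4 ^ x := by
  let f : ℝ → ℝ := fun x => log x + √(2 * x) * log (2 * x) + 10 * log (2 * x) - log 4 / 3 * x
  have hf' : ∀ x, 0 < x → 0 < x * (2 * x) ^ (√(2 * x) + 10) / 4 ^ (x / 3) := fun x h =>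
    div_pos (mul_pos h (rpow_pos_of_pos (mul_pos two_pos h) _)) (rpow_pos_of_pos four_pos _)
  have hf : ∀ x, 0 < x → f x = log (x * (2 * x) ^ (√(2 * x) + 10) / 4 ^ (x / 3)) := by
    intro x h5
    have h6 := mul_pos (zero_lt_two' ℝ) h5
    have h7 := rpow_pos_of_pos h6 (√(2 * x) + 10)
    rw [log_div (mul_pos h5 h7).ne' (rpow_pos_of_pos four_pos _).ne', log_mul h5.ne' h7.ne',
      log_rpow h6, log_rpow zero_lt_four]
    ring
  have h5 : 0 < x := lt_of_lt_of_le (by norm_num1) x_large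
  rw [← div_le_one (rpow_pos_of_pos four_pos x), ← div_div_eq_mul_div, ← rpow_sub four_pos, ←
    mul_div 2 x, mul_div_left_comm, ← mul_one_sub, (by norm_num1 : (1 : ℝ) - 2 / 3 = 1 / 3),
    mul_one_div, ← log_nonpos_iff (hf' x h5).le, ← hf x h5]
  have h : ConcaveOn ℝ (Set.Ioi 0.5) f := by
    apply ConcaveOn.sub
    · apply ConcaveOn.add
      · apply ConcaveOn.add
        · exact strictConcaveOn_log_Ioi.concaveOn.subset
            (Set.Ioi_subset_Ioi (by norm_num)) (convex_Ioi 0.5)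
        · convert ((strictConcaveOn_sqrt_mul_log_Ioi.concaveOn.comp_linearMap
            ((2 : ℝ) • LinearMap.id))) using 1
          · exact rfl
          · exact rfl
          ext x
          simp only [Set.mem_Ioi, Set.mem_preimage, LinearMap.smul_apply,
            LinearMap.id_coe, id_eq, smul_eq_mul]
          rw [← mul_lt_mul_iff_right₀ (two_pos)]
          norm_num1
          rfl
          rfl
      · have hl : ConcaveOn ℝ (Set.Ioi (0.5:ℝ)) (fun x : ℝ => log (2 * x)) := by
          convert (strictConcaveOn_log_Ioi.concaveOn.comp_linearMap
            ((2 : ℝ) • LinearMap.id)).subset ?_ (convex_Ioi 0.5) using 1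
          · exact rfl
          · exact rfl
          · rfl
          intro y hy
          simp only [Set.mem_Ioi, Set.mem_preimage, LinearMap.smul_apply,
            LinearMap.id_coe, id_eq, smul_eq_mul] at *
          linarith
        exact hl.smul (by norm_num : (0:ℝ) ≤ 10)
    · apply ConvexOn.smul
      · refine div_nonneg (log_nonneg (by norm_num1)) (by norm_num1)
      · exact convexOn_id (convex_Ioi (0.5 : ℝ))
  suffices ∃ x1 x2, 0.5 < x1 ∧ x1 < x2 ∧ x2 ≤ x ∧ 0 ≤ f x1 ∧ f x2 ≤ 0 by
    obtain ⟨x1, x2, h1, h2, h0, h3, h4⟩ := this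
    exact (h.right_le_of_le_left'' h1 ((h1.trans h2).trans_le h0) h2 h0 (h4.trans h3)).trans h4
  refine ⟨18, 2048, by norm_num1, by norm_num1, x_large, ?_, ?_⟩
  · have : √(2 * 18 : ℝ) = 6 := (sqrt_eq_iff_mul_self_eq_of_pos (by norm_num1)).mpr (by norm_num1)
    rw [hf _ (by norm_num1), log_nonneg_iff (by positivity), this, one_le_div (by norm_num1)]
    rw [show (6 : ℝ) + 10 = ((16 : ℕ) : ℝ) by norm_num1, rpow_natCast]
    norm_num1
  · have : √(2 * 2048 : ℝ) = 64 :=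
      (sqrt_eq_iff_mul_self_eq_of_pos (by norm_num1)).mpr (by norm_num1)
    rw [hf _ (by norm_num1), log_nonpos_iff (hf' _ (by norm_num1)).le, this,
        div_le_one (by positivity)]
    conv in 2048 => equals 2 ^ 11 => norm_num1
    conv in 2 * 2048 => equals 2 ^ 12 => norm_num1
    rw [show (64 : ℝ) + 10 = ((74 : ℕ) : ℝ) by norm_num1]
    rw [rpow_natCast, ← pow_mul, ← pow_add]
    conv in 4 => equals 2 ^ (2 : ℝ) => rw [rpow_two]; norm_num1
    rw [← rpow_mul, ← rpow_natCast]
    on_goal 1 => apply rpow_le_rpow_of_exponent_le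
    all_goals norm_num1


open Nat

theorem main_inequality {n : ℕ} (n_large : 2048 ≤ n) :
    n * (2 * n) ^ (Nat.sqrt (2 * n) + 10) * 4 ^ (2 * n / 3) ≤ 4 ^ n := by
  rw [← @Nat.cast_le ℝ]
  simp only [Nat.cast_add, Nat.cast_one, Nat.cast_mul, Nat.cast_pow, ← Real.rpow_natCast]
  refine _root_.trans ?_ (real_main_inequality (by exact_mod_cast n_large))
  simp only [Nat.cast_ofNat]
  gcongr
  · have n2_pos : 0 < 2 * n := by positivity
    exact mod_cast n2_pos
  · have h := Real.nat_sqrt_le_real_sqrt (a := 2 * n)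
    push_cast at h ⊢
    linarith
  · norm_num1
  · exact Nat.cast_div_le.trans (by norm_cast)

/-- If there are no two distinct primes in `(n, 2n-9]`, the set of primes in `(n, 2n]`
has at most 10 elements. -/
theorem card_small {n : ℕ} (n_large : 2048 ≤ n)
    (no_two : ¬∃ p r : ℕ, p.Prime ∧ r.Prime ∧ p < r ∧ n < p ∧ r + 9 ≤ 2 * n) :
    ((Finset.Ioc n (2 * n)).filter Nat.Prime).card ≤ 10 := by
  classical
  have hsub : (Finset.Ioc n (2 * n)).filter Nat.Prime ⊆
      ((Finset.Ioc n (2 * n - 9)).filter Nat.Prime) ∪ Finset.Ioc (2 * n - 9) (2 * n) := by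
    intro x hx
    simp only [Finset.mem_filter, Finset.mem_Ioc, Finset.mem_union] at *
    rcases hx with ⟨⟨h1, h2⟩, hp⟩
    by_cases hc : x ≤ 2 * n - 9
    · exact Or.inl ⟨⟨h1, hc⟩, hp⟩
    · exact Or.inr ⟨by omega, h2⟩
  refine (Finset.card_le_card hsub).trans ?_
  refine (Finset.card_union_le _ _).trans ?_
  have h1 : ((Finset.Ioc n (2 * n - 9)).filter Nat.Prime).card ≤ 1 := by
    rw [Finset.card_le_one]
    intro a ha b hb
    simp only [Finset.mem_filter, Finset.mem_Ioc] at ha hb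
    by_contra hab
    rcases Nat.lt_or_ge a b with h | h
    · exact no_two ⟨a, b, ha.2, hb.2, h, ha.1.1, by omega⟩
    · exact no_two ⟨b, a, hb.2, ha.2, by omega, hb.1.1, by omega⟩
  have h2 : (Finset.Ioc (2 * n - 9) (2 * n)).card ≤ 9 := by
    rw [Nat.card_Ioc]; omega
  omega

theorem centralBinom_le {n : ℕ} (n_large : 2048 ≤ n)
    (no_two : ¬∃ p r : ℕ, p.Prime ∧ r.Prime ∧ p < r ∧ n < p ∧ r + 9 ≤ 2 * n) :
    Nat.centralBinom n ≤ (2 * n) ^ (Nat.sqrt (2 * n) + 10) * 4 ^ (2 * n / 3) := by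
  classical
  have n_pos : 0 < n := by omega
  have n2_pos : 0 < 2 * n := by omega
  -- split the factorization product
  have key : Nat.centralBinom n =
      (∏ p ∈ Finset.range (2 * n / 3 + 1), p ^ (Nat.centralBinom n).factorization p) *
        ∏ p ∈ Finset.Ico (2 * n / 3 + 1) (2 * n + 1),
          p ^ (Nat.centralBinom n).factorization p := by
    rw [Finset.prod_range_mul_prod_Ico _ (by omega : 2 * n / 3 + 1 ≤ 2 * n + 1)]
    exact (Nat.prod_pow_factorization_centralBinom n).symm
  rw [key]
  have hB : (∏ p ∈ Finset.Ico (2 * n / 3 + 1) (2 * n + 1),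
      p ^ (Nat.centralBinom n).factorization p) ≤ (2 * n) ^ 10 := by
    set T := (Finset.Ioc n (2 * n)).filter Nat.Prime with hT
    have hTsub : T ⊆ Finset.Ico (2 * n / 3 + 1) (2 * n + 1) := by
      intro x hx
      simp only [hT, Finset.mem_filter, Finset.mem_Ioc, Finset.mem_Ico] at *
      omega
    have heq : ∏ p ∈ Finset.Ico (2 * n / 3 + 1) (2 * n + 1),
        p ^ (Nat.centralBinom n).factorization p
        = ∏ p ∈ T, p ^ (Nat.centralBinom n).factorization p := by
      symm
      refine Finset.prod_subset hTsub fun x hx hxT => ?_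
      simp only [hT, Finset.mem_filter, Finset.mem_Ioc, Finset.mem_Ico, not_and] at hx hxT
      by_cases hp : x.Prime
      · have hxn : x ≤ n := by
          by_contra hc
          exact hxT ⟨by omega, by omega⟩ hp
        rw [Nat.factorization_centralBinom_of_two_mul_self_lt_three_mul (by omega) hxn
          (by omega), _root_.pow_zero]
      · rw [Nat.factorization_eq_zero_of_not_prime _ hp, _root_.pow_zero]
    rw [heq]
    calc ∏ p ∈ T, p ^ (Nat.centralBinom n).factorization p
        ≤ ∏ _p ∈ T, 2 * n :=
          Finset.prod_le_prod' fun p _ => Nat.pow_factorization_choose_le n2_pos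
      _ = (2 * n) ^ T.card := Finset.prod_const _
      _ ≤ (2 * n) ^ 10 := Nat.pow_le_pow_right (by omega) (card_small n_large no_two)
  have hA : (∏ p ∈ Finset.range (2 * n / 3 + 1), p ^ (Nat.centralBinom n).factorization p)
      ≤ (2 * n) ^ Nat.sqrt (2 * n) * 4 ^ (2 * n / 3) := by
    set S := (Finset.range (2 * n / 3 + 1)).filter Nat.Prime with hS
    set f : ℕ → ℕ := fun x => x ^ (Nat.centralBinom n).factorization x with hf
    have hSprod : ∏ x ∈ S, f x = ∏ x ∈ Finset.range (2 * n / 3 + 1), f x := by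
      refine Finset.prod_filter_of_ne fun p _ h => ?_
      contrapose! h; dsimp only [f]
      rw [Nat.factorization_eq_zero_of_not_prime n.centralBinom h, _root_.pow_zero]
    rw [show (∏ p ∈ Finset.range (2 * n / 3 + 1), p ^ (Nat.centralBinom n).factorization p)
        = ∏ x ∈ Finset.range (2 * n / 3 + 1), f x from rfl, ← hSprod,
      ← Finset.prod_filter_mul_prod_filter_not S (· ≤ Nat.sqrt (2 * n))]
    apply Nat.mul_le_mul
    · refine (Finset.prod_le_prod' fun p _ => (?_ : f p ≤ 2 * n)).trans ?_
      · exact Nat.pow_factorization_choose_le n2_pos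
      have hcard : (Finset.Icc 1 (Nat.sqrt (2 * n))).card = Nat.sqrt (2 * n) := by
        rw [Nat.card_Icc, Nat.add_sub_cancel]
      rw [Finset.prod_const]
      refine pow_right_mono₀ (by omega) ((Finset.card_le_card fun x hx => ?_).trans hcard.le)
      obtain ⟨h1, h2⟩ := Finset.mem_filter.1 hx
      exact Finset.mem_Icc.mpr ⟨(Finset.mem_filter.1 h1).2.one_lt.le, h2⟩
    · refine le_trans ?_ (_root_.primorial_le_4_pow (2 * n / 3))
      refine (Finset.prod_le_prod' fun p hp => (?_ : f p ≤ p)).trans ?_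
      · obtain ⟨h1, h2⟩ := Finset.mem_filter.1 hp
        refine (pow_right_mono₀ (Finset.mem_filter.1 h1).2.one_lt.le ?_).trans (pow_one p).le
        exact Nat.factorization_choose_le_one (Nat.sqrt_lt'.mp <| not_le.1 h2)
      refine Finset.prod_le_prod_of_subset_of_one_le' (Finset.filter_subset _ _) ?_
      exact fun p hp _ => (Finset.mem_filter.1 hp).2.one_lt.le
  calc (∏ p ∈ Finset.range (2 * n / 3 + 1), p ^ (Nat.centralBinom n).factorization p) *
        ∏ p ∈ Finset.Ico (2 * n / 3 + 1) (2 * n + 1), p ^ (Nat.centralBinom n).factorization p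
      ≤ ((2 * n) ^ Nat.sqrt (2 * n) * 4 ^ (2 * n / 3)) * (2 * n) ^ 10 := Nat.mul_le_mul hA hB
    _ = (2 * n) ^ (Nat.sqrt (2 * n) + 10) * 4 ^ (2 * n / 3) := by ring

theorem two_primes_eventually (n : ℕ) (n_large : 2048 ≤ n) :
    ∃ p r : ℕ, p.Prime ∧ r.Prime ∧ p < r ∧ n < p ∧ r + 9 ≤ 2 * n := by
  by_contra no_two
  have H1 : n * (2 * n) ^ (Nat.sqrt (2 * n) + 10) * 4 ^ (2 * n / 3) ≤ 4 ^ n :=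
    main_inequality n_large
  have H2 : 4 ^ n < n * n.centralBinom :=
    Nat.four_pow_lt_mul_centralBinom n (by omega)
  have H3 : n.centralBinom ≤ (2 * n) ^ (Nat.sqrt (2 * n) + 10) * 4 ^ (2 * n / 3) :=
    centralBinom_le n_large no_two
  rw [mul_assoc] at H1
  exact not_le.2 H2 ((Nat.mul_le_mul_left n H3).trans H1)


theorem two_primes_succ {n : ℕ} (q r : ℕ) {p : ℕ} (hp : p.Prime) (hr : r.Prime) (hpr : p < r)
    (cov : r + 9 ≤ 2 * q)
    (H : n < q → ∃ p r : ℕ, p.Prime ∧ r.Prime ∧ p < r ∧ n < p ∧ r + 9 ≤ 2 * n)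
    (hn : n < p) : ∃ p r : ℕ, p.Prime ∧ r.Prime ∧ p < r ∧ n < p ∧ r + 9 ≤ 2 * n := by
  by_cases h : r + 9 ≤ 2 * n
  · exact ⟨p, r, hp, hr, hpr, hn, h⟩
  · exact H (by omega)

/-- For every `n ≥ 14` there are two distinct primes in `(n, 2n - 9]`. -/
theorem two_primes (n : ℕ) (hn : 14 ≤ n) :
    ∃ p r : ℕ, p.Prime ∧ r.Prime ∧ p < r ∧ n < p ∧ r + 9 ≤ 2 * n := by
  rcases le_or_gt 2048 n with h | h
  · exact two_primes_eventually n h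
  · have h' : n < 3881 := by omega
    revert h'
    refine two_primes_succ 1951 3889 (by norm_num) (by norm_num) (by norm_num) (by norm_num) ?_
    refine two_primes_succ 991 1973 (by norm_num) (by norm_num) (by norm_num) (by norm_num) ?_
    refine two_primes_succ 503 997 (by norm_num) (by norm_num) (by norm_num) (by norm_num) ?_
    refine two_primes_succ 263 509 (by norm_num) (by norm_num) (by norm_num) (by norm_num) ?_
    refine two_primes_succ 139 269 (by norm_num) (by norm_num) (by norm_num) (by norm_num) ?_
    refine two_primes_succ 79 149 (by norm_num) (by norm_num) (by norm_num) (by norm_num) ?_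
    refine two_primes_succ 47 83 (by norm_num) (by norm_num) (by norm_num) (by norm_num) ?_
    refine two_primes_succ 31 53 (by norm_num) (by norm_num) (by norm_num) (by norm_num) ?_
    refine two_primes_succ 23 37 (by norm_num) (by norm_num) (by norm_num) (by norm_num) ?_
    refine two_primes_succ 19 29 (by norm_num) (by norm_num) (by norm_num) (by norm_num) ?_
    refine two_primes_succ 17 23 (by norm_num) (by norm_num) (by norm_num) (by norm_num) ?_
    refine two_primes_succ 14 19 (by norm_num) (by norm_num) (by norm_num) (by norm_num) ?_
    exact fun hlt => absurd hn (by omega)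

end TwoPrimesAux

theorem exists_two_primes_between_half (x : ℝ) (hx : 27 < x) :
    ∃ p r : ℕ, p.Prime ∧ r.Prime ∧ p ≠ r ∧
      x / 2 < (p : ℝ) ∧ (p : ℝ) < x - 8 ∧ x / 2 < (r : ℝ) ∧ (r : ℝ) < x - 8 := by
  rcases lt_or_ge x 28 with h28 | h28
  · refine ⟨17, 19, by norm_num, by norm_num, by norm_num, ?_, ?_, ?_, ?_⟩ <;>
      push_cast <;> linarith
  · have hx2 : (0:ℝ) ≤ x / 2 := by linarith
    have hn14 : 14 ≤ Nat.floor (x / 2) := Nat.le_floor (by push_cast; linarith)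
    obtain ⟨p, r, hp, hr, hpr, hnp, hr9⟩ := TwoPrimesAux.two_primes _ hn14
    have hfl : ((Nat.floor (x / 2) : ℕ) : ℝ) ≤ x / 2 := Nat.floor_le hx2
    have hfu : x / 2 < (Nat.floor (x / 2) : ℝ) + 1 := Nat.lt_floor_add_one _
    have hpn : ((Nat.floor (x / 2) : ℕ) : ℝ) + 1 ≤ (p : ℝ) := by exact_mod_cast hnp
    have hrR : (r : ℝ) + 9 ≤ 2 * ((Nat.floor (x / 2) : ℕ) : ℝ) := by exact_mod_cast hr9
    have hprR : (p : ℝ) < r := by exact_mod_cast hpr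
    exact ⟨p, r, hp, hr, hpr.ne, by linarith, by linarith, by linarith, by linarith⟩
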